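/- Let G be a connected 3-hypergraph (every edge has exactly 3 vertices) with vertex set of size n and edge set of size m, such that every pair of distinct edges shares at most one vertex and each 1-simplex (pair of vertices inside an edge) lies in exactly one edge. If the geometric realization of the 2-dimensional simplicial complex with 2-simplices the edges of G has first Betti number 0 and is connected, then G is a hypertree (has no cycles), and n = 2m + 1. -/

import Mathlib

set_option linter.unusedSectionVars false



variable {V : Type*} [Fintype V] [LinearOrder V]

/-- The 1-simplices of the complex `|G|`: pairs of vertices contained in a
hyperedge. -/
def pairsIn (E : Finset (Finset V)) : Finset (Finset V) :=
  E.biUnion fun e => e.powersetCard 2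

/-- The simplicial boundary matrix `∂₂` of the 2-complex `|G|` over `ℚ`
(vertices ordered by the linear order on `V`): for a 2-face `e` and a 1-face
`p ⊆ e` with omitted vertex `x`, the entry is `(-1)^{#{y ∈ e : y < x}}`. -/
noncomputable def bdry2 (E : Finset (Finset V)) :
    Matrix {p : Finset V // p ∈ pairsIn E} {e : Finset V // e ∈ E} ℚ :=
  fun p e => if (p : Finset V) ⊆ e then
    ∑ x ∈ (e : Finset V) \ (p : Finset V), (-1 : ℚ) ^ ((e : Finset V).filter (· < x)).card
  else 0

/-- The simplicial boundary matrix `∂₁`: for a 1-face `p = {a < b}`,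
`∂₁ p = b - a`. -/
noncomputable def bdry1 (E : Finset (Finset V)) :
    Matrix V {p : Finset V // p ∈ pairsIn E} ℚ :=
  fun v p => if v ∈ (p : Finset V) then
    (-1 : ℚ) ^ (1 + ((p : Finset V).filter (· < v)).card)
  else 0

/-- The first Betti number of `|G|` over `ℚ`:
`dim (ker ∂₁ / (im ∂₂ ∩ ker ∂₁))`. -/
noncomputable def betti1 (E : Finset (Finset V)) : ℕ :=
  Module.finrank ℚ
    (LinearMap.ker (bdry1 E).mulVecLin ⧸
      ((LinearMap.range (bdry2 E).mulVecLin ⊓ LinearMap.ker (bdry1 E).mulVecLin).comap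
        (LinearMap.ker (bdry1 E).mulVecLin).subtype))

/-- A cycle in a hypergraph: an alternating closed walk `v₀ e₁ v₁ ⋯ e_k v_k`
with `v₀ = v_k`, at least two edges, and otherwise distinct edges and
vertices. -/
def HasCycle (E : Finset (Finset V)) : Prop :=
  ∃ k : ℕ, 2 ≤ k ∧ ∃ (v : Fin (k+1) → V) (e : Fin k → Finset V),
    (∀ i, e i ∈ E) ∧
    (∀ i : Fin k, v i.castSucc ∈ e i ∧ v i.succ ∈ e i) ∧
    v 0 = v (Fin.last k) ∧
    Function.Injective e ∧
    (∀ i j : Fin k, v i.castSucc = v j.castSucc → i = j)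

/-- The hypergraph is connected: every two vertices are joined by a walk. -/
def HGConnected (E : Finset (Finset V)) : Prop :=
  ∀ u v : V, Relation.ReflTransGen (fun a b => ∃ e ∈ E, a ∈ e ∧ b ∈ e) u v

open Submodule Module


noncomputable def delta (x : V) : V → ℚ := Pi.single x 1

noncomputable def Wsp (e : Finset V) : Submodule ℚ (V → ℚ) :=
  Submodule.span ℚ {x | ∃ u ∈ e, ∃ w ∈ e, x = delta u - delta w}

lemma delta_sub_mem {e : Finset V} {u w : V} (hu : u ∈ e) (hw : w ∈ e) :
    delta u - delta w ∈ Wsp e := Submodule.subset_span ⟨u, hu, w, hw, rfl⟩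

lemma finrank_Wsp_le {e : Finset V} (he : e.card = 3) :
    finrank ℚ (Wsp e) ≤ 2 := by
  obtain ⟨a, b, c, hab, hac, hbc, rfl⟩ := Finset.card_eq_three.mp he
  have hsub : Wsp ({a, b, c} : Finset V) ≤
      Submodule.span ℚ ({delta b - delta a, delta c - delta a} : Set (V → ℚ)) := by
    rw [Wsp, Submodule.span_le]
    rintro x ⟨u, hu, w, hw, rfl⟩
    have h : ∀ z ∈ ({a, b, c} : Finset V),
        delta z - delta a ∈ span ℚ ({delta b - delta a, delta c - delta a} : Set (V → ℚ)) := by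
      intro z hz
      simp only [Finset.mem_insert, Finset.mem_singleton] at hz
      rcases hz with rfl | rfl | rfl
      · simpa using Submodule.zero_mem _
      · exact subset_span (Or.inl rfl)
      · exact subset_span (Or.inr rfl)
    have hx : delta u - delta w = (delta u - delta a) - (delta w - delta a) := by abel
    rw [hx]
    exact Submodule.sub_mem _ (h u hu) (h w hw)
  refine (Submodule.finrank_mono hsub).trans ?_
  refine (finrank_span_le_card _).trans ?_
  have h5 : ({delta b - delta a, delta c - delta a} : Set (V → ℚ)).toFinset
      ⊆ {delta b - delta a, delta c - delta a} := by
    intro x hx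
    simpa using hx
  exact (Finset.card_le_card h5).trans ((Finset.card_insert_le _ _).trans (by simp))

lemma finrank_sup_le' (p q : Submodule ℚ (V → ℚ)) :
    finrank ℚ ↥(p ⊔ q) ≤ finrank ℚ p + finrank ℚ q := by
  have := Submodule.finrank_sup_add_finrank_inf_eq p q
  omega

lemma finrank_finsetSup_le (F : Finset (Finset V)) (h3 : ∀ e ∈ F, e.card = 3) :
    finrank ℚ ↥(F.sup Wsp) ≤ 2 * F.card := by
  classical
  revert h3
  induction F using Finset.induction_on with
  | empty => intro _; simp
  | @insert a F ha ih =>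
    intro h3
    rw [Finset.sup_insert]
    have h1 : finrank ℚ ↥(Wsp a ⊔ F.sup Wsp) ≤ finrank ℚ (Wsp a) + finrank ℚ ↥(F.sup Wsp) :=
      finrank_sup_le' _ _
    have h2 : finrank ℚ (Wsp a) ≤ 2 := finrank_Wsp_le (h3 a (Finset.mem_insert_self a F))
    have h4 : finrank ℚ ↥(F.sup Wsp) ≤ 2 * F.card :=
      ih (fun e he => h3 e (Finset.mem_insert_of_mem he))

    rw [Finset.card_insert_of_notMem ha]
    omega

lemma card_le_of_conn [Nonempty V] (E : Finset (Finset V)) (hconn : HGConnected E) :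
    Fintype.card V ≤ finrank ℚ ↥(E.sup Wsp) + 1 := by
  classical
  obtain ⟨v₀⟩ := ‹Nonempty V›
  set T := E.sup Wsp with hT
  have key : ∀ u : V, delta u - delta v₀ ∈ T := by
    intro u
    induction hconn v₀ u with
    | refl => simp
    | tail hab hbc ih =>
      obtain ⟨e, he, hb, hc⟩ := hbc
      have h1 : delta _ - delta _ ∈ Wsp e := delta_sub_mem hc hb
      have h2 : Wsp e ≤ T := Finset.le_sup he
      have h3 := T.add_mem (h2 h1) ih
      simpa using h3
  have htop : (⊤ : Submodule ℚ (V → ℚ)) ≤ T ⊔ span ℚ {delta v₀} := by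
    intro x _
    have hx : x = ∑ v : V, x v • delta v := by
      ext w
      rw [Finset.sum_apply]
      simp [delta, Pi.single_apply]
    rw [hx]
    refine Submodule.sum_mem _ fun v _ => Submodule.smul_mem _ _ ?_
    have : delta v = (delta v - delta v₀) + delta v₀ := by abel
    rw [this]
    exact Submodule.add_mem _ (Submodule.mem_sup_left (key v))
      (Submodule.mem_sup_right (subset_span rfl))
  have h1 : finrank ℚ (⊤ : Submodule ℚ (V → ℚ)) ≤ finrank ℚ ↥(T ⊔ span ℚ {delta v₀}) :=
    Submodule.finrank_mono htop
  have h2 : finrank ℚ ↥(T ⊔ span ℚ {delta v₀}) ≤ finrank ℚ T + finrank ℚ (span ℚ ({delta v₀} : Set (V → ℚ))) :=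
    finrank_sup_le' _ _
  have h3 : finrank ℚ (span ℚ ({delta v₀} : Set (V → ℚ))) ≤ 1 := by
    refine (finrank_span_le_card _).trans ?_
    simp
  have h4 : finrank ℚ (⊤ : Submodule ℚ (V → ℚ)) = Fintype.card V := by
    rw [finrank_top, Module.finrank_fintype_fun_eq_card]
  omega

lemma card_pairsIn (E : Finset (Finset V)) (h3 : ∀ e ∈ E, e.card = 3)
    (hunique : ∀ u v : V, u ≠ v → ∀ e ∈ E, u ∈ e → v ∈ e →
      ∀ e' ∈ E, u ∈ e' → v ∈ e' → e = e') :
    (pairsIn E).card = 3 * E.card := by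
  classical
  rw [pairsIn, Finset.card_biUnion]
  · have hch : Nat.choose 3 2 = 3 := by decide
    rw [Finset.sum_congr rfl (fun e he => by rw [Finset.card_powersetCard, h3 e he, hch]),
      Finset.sum_const, smul_eq_mul, mul_comm]
  · intro e he e' he' hne
    rw [Function.onFun_apply, Finset.disjoint_left]
    intro p hp hp'
    rw [Finset.mem_powersetCard] at hp hp'
    obtain ⟨u, w, huw, hpeq⟩ := Finset.card_eq_two.mp hp.2
    subst hpeq
    exact hne (hunique u w huw e he (hp.1 (by simp)) (hp.1 (by simp))
      e' he' (hp'.1 (by simp)) (hp'.1 (by simp)))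

lemma bdry1_col_sum (E : Finset (Finset V)) (p : {p : Finset V // p ∈ pairsIn E}) :
    ∑ v : V, bdry1 E v p = 0 := by
  classical
  obtain ⟨e, he, hp⟩ := Finset.mem_biUnion.mp p.2
  rw [Finset.mem_powersetCard] at hp
  obtain ⟨a, b, hab, hpeq⟩ := Finset.card_eq_two.mp hp.2
  -- wlog a < b
  have main : ∀ a b : V, a < b → (p : Finset V) = {a, b} → ∑ v : V, bdry1 E v p = 0 := by
    intro a b hlt hpe
    have hactual : ∑ v : V, bdry1 E v p = ∑ v ∈ (p : Finset V), bdry1 E v p := by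
      refine (Finset.sum_subset (Finset.subset_univ _) (fun v _ hv => ?_)).symm
      simp [bdry1, hv]
    rw [hactual, hpe]
    rw [Finset.sum_pair hlt.ne]
    have hfa : (({a, b} : Finset V).filter (· < a)) = ∅ := by
      ext x
      simp only [Finset.mem_filter, Finset.mem_insert, Finset.mem_singleton,
        Finset.notMem_empty, iff_false, not_and]
      rintro (rfl | rfl)
      · exact lt_irrefl _
      · exact fun h => absurd h (not_lt.2 hlt.le)
    have hfb : (({a, b} : Finset V).filter (· < b)) = {a} := by
      ext x
      simp only [Finset.mem_filter, Finset.mem_insert, Finset.mem_singleton]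
      constructor
      · rintro ⟨rfl | rfl, h⟩
        · rfl
        · exact absurd h (lt_irrefl _)
      · rintro rfl
        exact ⟨Or.inl rfl, hlt⟩
    have hba : bdry1 E a p = -1 := by
      rw [bdry1, if_pos (by rw [hpe]; simp), hpe, hfa]
      simp
    have hbb : bdry1 E b p = 1 := by
      rw [bdry1, if_pos (by rw [hpe]; simp), hpe, hfb]
      simp [pow_succ]
    rw [hba, hbb]
    ring
  rcases hab.lt_or_gt with h | h
  · exact main a b h hpeq
  · exact main b a h (by rw [hpeq, Finset.pair_comm])

lemma finrank_range_bdry1 [Nonempty V] (E : Finset (Finset V)) :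
    finrank ℚ (LinearMap.range (bdry1 E).mulVecLin) ≤ Fintype.card V - 1 := by
  classical
  set φ : (V → ℚ) →ₗ[ℚ] ℚ := ∑ v : V, LinearMap.proj v with hφdef
  have hφ : ∀ x : V → ℚ, φ x = ∑ v, x v := by
    intro x
    simp [hφdef, LinearMap.sum_apply, LinearMap.proj_apply]
  have hle : LinearMap.range (bdry1 E).mulVecLin ≤ LinearMap.ker φ := by
    rintro _ ⟨x, rfl⟩
    rw [LinearMap.mem_ker, hφ]
    simp only [Matrix.mulVecLin_apply, Matrix.mulVec, dotProduct]
    rw [Finset.sum_comm]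
    refine Finset.sum_eq_zero fun p _ => ?_
    rw [← Finset.sum_mul, bdry1_col_sum, zero_mul]
  have hker : finrank ℚ (LinearMap.ker φ) = Fintype.card V - 1 := by
    have h1 := LinearMap.finrank_range_add_finrank_ker φ
    rw [Module.finrank_fintype_fun_eq_card] at h1
    have h2 : LinearMap.range φ = ⊤ := by
      rw [LinearMap.range_eq_top]
      intro c
      refine ⟨Pi.single (Classical.arbitrary V) c, ?_⟩
      rw [hφ]
      simp
    rw [h2, finrank_top, finrank_self] at h1
    omega
  rw [← hker]
  exact Submodule.finrank_mono hle

lemma finrank_ker_bdry1_le (E : Finset (Finset V)) (hb1 : betti1 E = 0) :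
    finrank ℚ (LinearMap.ker (bdry1 E).mulVecLin) ≤ E.card := by
  classical
  set K := LinearMap.ker (bdry1 E).mulVecLin with hK
  set R2 := LinearMap.range (bdry2 E).mulVecLin with hR2
  set S := (R2 ⊓ K).comap K.subtype with hS
  have h1 : finrank ℚ (K ⧸ S) + finrank ℚ S = finrank ℚ K :=
    Submodule.finrank_quotient_add_finrank S
  have h2 : finrank ℚ S = finrank ℚ ↥(R2 ⊓ K) :=
    (Submodule.comapSubtypeEquivOfLe inf_le_right).finrank_eq
  have h3 : finrank ℚ ↥(R2 ⊓ K) ≤ finrank ℚ R2 := Submodule.finrank_mono inf_le_left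
  have h4 : finrank ℚ R2 ≤ E.card := by
    have := LinearMap.finrank_range_le (bdry2 E).mulVecLin
    rwa [Module.finrank_fintype_fun_eq_card, Fintype.card_coe] at this
  have h5 : finrank ℚ (K ⧸ S) = 0 := hb1
  omega

open Fin.NatCast in
lemma cycle_bound [Nonempty V] (E : Finset (Finset V)) (h3 : ∀ e ∈ E, e.card = 3)
    (hconn : HGConnected E) (hcyc : HasCycle E) :
    Fintype.card V ≤ 2 * E.card := by
  classical
  obtain ⟨k, hk, v, e, heE, hve, hclose, einj, vinj⟩ := hcyc
  have hk0 : 0 < k := by omega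
  set i0 : Fin k := ⟨0, hk0⟩ with hi0
  set f := e i0 with hf
  have hc0 : i0.castSucc = (0 : Fin (k+1)) := by
    ext
    simp [hi0]
  have hv1 : (1 : Fin (k+1)).val = 1 := by
    rw [Fin.val_one']
    exact Nat.mod_eq_of_lt (by omega)
  have hs0 : i0.succ = (1 : Fin (k+1)) := by
    ext
    rw [hv1]
    simp [hi0]
  set x₀ : V → ℚ := delta (v 1) - delta (v 0) with hx₀
  have hx₀f : x₀ ∈ Wsp f := by
    have h1 := (hve i0).1
    have h2 := (hve i0).2
    rw [hc0] at h1
    rw [hs0] at h2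
    exact delta_sub_mem h2 h1
  have hne : v (1 : Fin (k+1)) ≠ v 0 := by
    intro h
    have h1c : (⟨1, by omega⟩ : Fin k).castSucc = (1 : Fin (k+1)) := by
      ext
      rw [hv1]
      simp
    have h0c : (⟨0, hk0⟩ : Fin k).castSucc = (0 : Fin (k+1)) := by
      ext
      simp
    have := vinj ⟨1, by omega⟩ ⟨0, hk0⟩ (by rw [h1c, h0c]; exact h)
    simp at this
  have hx₀ne : x₀ ≠ 0 := by
    intro h
    have := congrFun h (v (1 : Fin (k+1)))
    simp [hx₀, delta, Pi.single_apply, hne] at this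
  set U := (E.erase f).sup Wsp with hU
  have hx₀U : x₀ ∈ U := by
    set g : ℕ → V → ℚ := fun i => delta (v i) with hg
    have htel : ∑ i ∈ Finset.range k, (g (i + 1) - g i) = 0 := by
      rw [Finset.sum_range_sub]
      have hkk : ((k : ℕ) : Fin (k+1)) = Fin.last k := by
        ext
        rw [Fin.val_natCast, Fin.val_last]
        exact Nat.mod_eq_of_lt (by omega)
      have h00 : ((0 : ℕ) : Fin (k+1)) = 0 := by simp
      rw [hg]
      simp only [hkk, h00]
      rw [← hclose]
      simp
    have h0mem : (0 : ℕ) ∈ Finset.range k := by simp [hk0]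
    have hsplit := Finset.add_sum_erase (Finset.range k) (fun i => g (i + 1) - g i) h0mem
    have hx : x₀ = -∑ i ∈ (Finset.range k).erase 0, (g (i + 1) - g i) := by
      have hgx : x₀ = g 1 - g 0 := by
        rw [hg, hx₀]
        norm_num
      rw [hgx]
      have : (g (0 + 1) - g 0) + ∑ i ∈ (Finset.range k).erase 0, (g (i + 1) - g i) = 0 := by
        rw [hsplit, htel]
      rw [show (0:ℕ) + 1 = 1 from rfl] at this
      linear_combination (norm := abel) this
    rw [hx]
    refine Submodule.neg_mem _ (Submodule.sum_mem _ fun i hi => ?_)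
    rw [Finset.mem_erase, Finset.mem_range] at hi
    obtain ⟨hi0', hik⟩ := hi
    set j : Fin k := ⟨i, hik⟩ with hj
    have hcj : ((i : ℕ) : Fin (k+1)) = j.castSucc := by
      ext
      rw [Fin.val_natCast, Fin.coe_castSucc]
      exact Nat.mod_eq_of_lt (by omega)
    have hsj : ((i + 1 : ℕ) : Fin (k+1)) = j.succ := by
      ext
      rw [Fin.val_natCast, Fin.val_succ]
      exact Nat.mod_eq_of_lt (by omega)
    have hmem : g (i + 1) - g i ∈ Wsp (e j) := by
      rw [hg]
      simp only [hcj, hsj]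
      exact delta_sub_mem (hve j).2 (hve j).1
    have hje : e j ∈ E.erase f := by
      rw [Finset.mem_erase]
      refine ⟨fun h => hi0' ?_, heE j⟩
      have := einj h
      rw [hj, hi0] at this
      simpa using this
    exact Finset.le_sup (f := Wsp) hje hmem
  have hfE : f ∈ E := heE i0
  have hTsup : E.sup Wsp = Wsp f ⊔ U := by
    rw [hU, ← Finset.sup_insert, Finset.insert_erase hfE]
  have hWf : finrank ℚ (Wsp f) ≤ 2 := finrank_Wsp_le (h3 f hfE)
  have hUle : finrank ℚ ↥U ≤ 2 * (E.erase f).card :=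
    finrank_finsetSup_le _ (fun e' he' => h3 e' (Finset.mem_of_mem_erase he'))
  have hcard : (E.erase f).card = E.card - 1 := Finset.card_erase_of_mem hfE
  have hinf : 1 ≤ finrank ℚ ↥(Wsp f ⊓ U) := by
    have hnt : Nontrivial ↥(Wsp f ⊓ U) := by
      refine nontrivial_of_ne ⟨x₀, Submodule.mem_inf.mpr ⟨hx₀f, hx₀U⟩⟩ 0 ?_
      intro h
      exact hx₀ne (by simpa using congrArg Subtype.val h)
    exact Module.finrank_pos_iff.mpr hnt
  have heq := Submodule.finrank_sup_add_finrank_inf_eq (Wsp f) U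
  have hm : 1 ≤ E.card := Finset.card_pos.mpr ⟨f, hfE⟩
  have hcv := card_le_of_conn E hconn
  rw [hTsup] at hcv
  omega

/-- let `G` be a connected 3-hypergraph (each edge has exactly 3
vertices) in which two distinct edges share at most one vertex and each pair of
vertices lying in an edge lies in exactly one edge.  If the geometric
realization of the associated 2-dimensional complex is connected with first
Betti number 0, then `G` is a hypertree and `#V = 2·#E + 1`. -/
theorem stmt16 [Nonempty V] (E : Finset (Finset V))
    (h3 : ∀ e ∈ E, e.card = 3)
    (hshare : ∀ e ∈ E, ∀ e' ∈ E, e ≠ e' → (e ∩ e').card ≤ 1)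
    (hunique : ∀ u v : V, u ≠ v → ∀ e ∈ E, u ∈ e → v ∈ e →
      ∀ e' ∈ E, u ∈ e' → v ∈ e' → e = e')
    (hconn : HGConnected E)
    (hb1 : betti1 E = 0) :
    ¬ HasCycle E ∧ Fintype.card V = 2 * E.card + 1 := by
  classical
  have hlow : 2 * E.card + 1 ≤ Fintype.card V := by
    have h1 := LinearMap.finrank_range_add_finrank_ker (bdry1 E).mulVecLin
    rw [Module.finrank_fintype_fun_eq_card, Fintype.card_coe,
      card_pairsIn E h3 hunique] at h1
    have h2 := finrank_range_bdry1 E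
    have h3' := finrank_ker_bdry1_le E hb1
    have hpos : 1 ≤ Fintype.card V := Fintype.card_pos
    omega
  refine ⟨fun hcyc => ?_, ?_⟩
  · have := cycle_bound E h3 hconn hcyc
    omega
  · have h1 := card_le_of_conn E hconn
    have h2 := finrank_finsetSup_le E h3
    omega
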